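/- If T is an increasing shifted tableau such that row(T) is an FPF-involution word, then every entry on the main diagonal of T is an even number. -/

import Mathlib

/-- The function underlying the permutation `Θ = (12)(34)(56)⋯` on positive integers
(fixing `0`). -/
def thetaFun (n : ℕ) : ℕ :=
  if n = 0 then 0 else if n % 2 = 1 then n + 1 else n - 1

lemma thetaFun_involutive : Function.Involutive thetaFun := by
  intro n
  by_cases h0 : n = 0
  · simp [thetaFun, h0]
  · by_cases h1 : n % 2 = 1
    · have e1 : thetaFun n = n + 1 := by simp [thetaFun, h0, h1]
      have h2 : ¬ ((n + 1) % 2 = 1) := by omega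
      have h3 : ¬ (n + 1 = 0) := by omega
      rw [e1]
      simp only [thetaFun, if_neg h3, if_neg h2]
      omega
    · have e1 : thetaFun n = n - 1 := by simp [thetaFun, h0, h1]
      have h2 : (n - 1) % 2 = 1 := by omega
      have h3 : ¬ (n - 1 = 0) := by omega
      rw [e1]
      simp only [thetaFun, if_neg h3, if_pos h2]
      omega

/-- The fixed-point-free involution `Θ = (12)(34)(56)⋯`. -/
def theta : Equiv.Perm ℕ := Function.Involutive.toPerm thetaFun thetaFun_involutive

/-- The simple transposition `s_i = (i, i+1)`. -/
def sPerm (i : ℕ) : Equiv.Perm ℕ := Equiv.swap i (i + 1)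

/-- For a word `w = i₁i₂⋯i_l`, the permutation `s_{i_l}⋯s_{i₁} Θ s_{i₁}⋯s_{i_l}`. -/
def heckeConj (w : List ℕ) : Equiv.Perm ℕ :=
  ((w.map sPerm).reverse).prod * theta * (w.map sPerm).prod

/-- `w` is a symplectic Hecke word for `z`, i.e. a word of positive letters with
`z = s_{i_l}⋯s_{i₁} Θ s_{i₁}⋯s_{i_l}`. -/
def SympHecke (z : Equiv.Perm ℕ) (w : List ℕ) : Prop :=
  (∀ i ∈ w, 1 ≤ i) ∧ z = heckeConj w

/-- `z` belongs to `F_∞`, the conjugacy set `{π⁻¹ Θ π : π ∈ S_∞}`. -/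
def InFinf (z : Equiv.Perm ℕ) : Prop := ∃ w : List ℕ, SympHecke z w

/-- `w` is an FPF-involution word for `z`: a symplectic Hecke word for `z` of minimal
length among all symplectic Hecke words for `z`. -/
def IsFPFWordFor (z : Equiv.Perm ℕ) (w : List ℕ) : Prop :=
  SympHecke z w ∧ ∀ w' : List ℕ, SympHecke z w' → w.length ≤ w'.length

/-- `w` is an FPF-involution word (for the element it determines). -/
def IsFPFWord (w : List ℕ) : Prop := IsFPFWordFor (heckeConj w) w
/-- A shifted tableau, given as its list of rows (top to bottom); row `i` (0-indexed)
implicitly occupies absolute columns `i, i+1, …`. -/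
abbrev Tab := List (List ℕ)

/-- Replace row `i` of `T` by `r`, creating a new row if `i = T.length`. -/
def updRow (T : Tab) (i : ℕ) (r : List ℕ) : Tab :=
  if i < T.length then T.set i r else T ++ [r]

/-- The entries of absolute column `c` of `T`, from top to bottom. -/
def colList (T : Tab) (c : ℕ) : List ℕ :=
  (List.range (c + 1)).filterMap (fun i => (T[i]?).bind (fun r => r[c - i]?))

mutual
/-- `InsRow T i a T' pos pr`: the row-insertion phase of FPF-involution Coxeter-Knuth
insertion, inserting the letter `a` into row `i` of `T`, eventually producing the
tableau `T'` with new box at position `pos` (row, absolute column), `pr = true` iff the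
insertion terminated with a column insertion. -/
inductive InsRow : Tab → ℕ → ℕ → Tab → ℕ × ℕ → Bool → Prop
  | append (T : Tab) (i a : ℕ) (r : List ℕ) :
      r = T.getD i [] →
      r.dropWhile (fun x => decide (x < a)) = [] →
      InsRow T i a (updRow T i (r ++ [a])) (i, i + r.length) false
  | equal (T : Tab) (i a : ℕ) (rest : List ℕ) (T' : Tab) (pos : ℕ × ℕ) (pr : Bool) :
      (T.getD i []).dropWhile (fun x => decide (x < a)) = a :: rest →
      InsRow T (i+1) (a+1) T' pos pr →
      InsRow T i a T' pos pr
  | parity (T : Tab) (i a b : ℕ) (rest : List ℕ) (T' : Tab) (pos : ℕ × ℕ) (pr : Bool) :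
      (T.getD i []).takeWhile (fun x => decide (x < a)) = [] →
      (T.getD i []).dropWhile (fun x => decide (x < a)) = b :: rest →
      a < b → a % 2 ≠ b % 2 →
      InsCol T (i+1) (a+2) T' pos pr →
      InsRow T i a T' pos pr
  | bumpRow (T : Tab) (i a b : ℕ) (pre rest : List ℕ) (T' : Tab) (pos : ℕ × ℕ) (pr : Bool) :
      pre = (T.getD i []).takeWhile (fun x => decide (x < a)) →
      (T.getD i []).dropWhile (fun x => decide (x < a)) = b :: rest →
      a < b → pre ≠ [] →
      InsRow (T.set i (pre ++ a :: rest)) (i+1) b T' pos pr →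
      InsRow T i a T' pos pr
  | bumpDiag (T : Tab) (i a b : ℕ) (rest : List ℕ) (T' : Tab) (pos : ℕ × ℕ) (pr : Bool) :
      (T.getD i []).takeWhile (fun x => decide (x < a)) = [] →
      (T.getD i []).dropWhile (fun x => decide (x < a)) = b :: rest →
      a < b → a % 2 = b % 2 →
      InsCol (T.set i (a :: rest)) (i+1) b T' pos pr →
      InsRow T i a T' pos pr

/-- `InsCol T c x T' pos pr`: the column-insertion phase, inserting `x` into the
absolute column `c` of `T`. -/
inductive InsCol : Tab → ℕ → ℕ → Tab → ℕ × ℕ → Bool → Prop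
  | append (T : Tab) (c x k : ℕ) :
      (colList T c).dropWhile (fun y => decide (y < x)) = [] →
      k = (colList T c).length →
      (T.getD k []).length = c - k →
      k ≤ c →
      InsCol T c x (updRow T k ((T.getD k []) ++ [x])) (k, c) true
  | equal (T : Tab) (c x : ℕ) (rest : List ℕ) (T' : Tab) (pos : ℕ × ℕ) (pr : Bool) :
      (colList T c).dropWhile (fun y => decide (y < x)) = x :: rest →
      InsCol T (c+1) (x+1) T' pos pr →
      InsCol T c x T' pos pr
  | bump (T : Tab) (c x b k : ℕ) (rest : List ℕ) (T' : Tab) (pos : ℕ × ℕ) (pr : Bool) :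
      (colList T c).dropWhile (fun y => decide (y < x)) = b :: rest →
      x < b →
      k = ((colList T c).takeWhile (fun y => decide (y < x))).length →
      InsCol (T.set k ((T.getD k []).set (c - k) x)) (c+1) b T' pos pr →
      InsCol T c x T' pos pr
end

/-- Insertion of a word, letter by letter, each letter starting at the first row.
`InsWord T w T'` means `T ← w = T'`. -/
inductive InsWord : Tab → List ℕ → Tab → Prop
  | nil (T : Tab) : InsWord T [] T
  | cons (T T₁ T₂ : Tab) (a : ℕ) (w : List ℕ) (pos : ℕ × ℕ) (pr : Bool) :
      InsRow T 0 a T₁ pos pr → InsWord T₁ w T₂ → InsWord T (a :: w) T₂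

/-- A recording tableau: each box carries a label together with a primed flag. -/
abbrev RTab := List (List (ℕ × Bool))

/-- Replace row `i` of a recording tableau, creating a new row if needed. -/
def updRowR (Q : RTab) (i : ℕ) (r : List (ℕ × Bool)) : RTab :=
  if i < Q.length then Q.set i r else Q ++ [r]

/-- `InsWordRec T Q k w T' Q'`: insertion of the word `w` starting from the pair
`(T, Q)` with next label `k`, recording label `k` (primed iff the insertion of the
letter terminated with a column insertion) in the new box. -/
inductive InsWordRec : Tab → RTab → ℕ → List ℕ → Tab → RTab → Prop
  | nil (T : Tab) (Q : RTab) (k : ℕ) : InsWordRec T Q k [] T Q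
  | cons (T T₁ T₂ : Tab) (Q Q₂ : RTab) (k a i j : ℕ) (w : List ℕ) (pr : Bool) :
      InsRow T 0 a T₁ (i, j) pr →
      InsWordRec T₁ (updRowR Q i ((Q.getD i []) ++ [(k, pr)])) (k+1) w T₂ Q₂ →
      InsWordRec T Q k (a :: w) T₂ Q₂

/-- `T` is an increasing shifted tableau (with positive entries). -/
def IsIncreasingTab (T : Tab) : Prop :=
  (∀ r ∈ T, r ≠ []) ∧
  List.Chain' (fun r s : List ℕ => s.length < r.length) T ∧
  (∀ r ∈ T, List.Chain' (· < ·) r) ∧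
  (∀ r ∈ T, ∀ x ∈ r, 1 ≤ x) ∧
  (∀ i k x y, (T.getD (i+1) [])[k]? = some x →
      (T.getD i [])[k+1]? = some y → y < x)

/-- The row reading word of `T`: rows from bottom to top, each left to right. -/
def rowWord (T : Tab) : List ℕ := T.reverse.flatten

/-! ### Auxiliary lemmas -/

lemma sPerm_mul_theta_comm {a : ℕ} (ha : a % 2 = 1) : sPerm a * theta = theta * sPerm a := by
  ext n
  simp only [Equiv.Perm.mul_apply, sPerm, theta, Function.Involutive.toPerm,
    Equiv.coe_fn_mk, Equiv.swap_apply_def, thetaFun]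
  split_ifs <;> (try exact (False.elim (by assumption))) <;> omega

lemma sPerm_inv (a : ℕ) : (sPerm a)⁻¹ = sPerm a := Equiv.swap_inv _ _

lemma sPerm_theta_sPerm {a : ℕ} (ha : a % 2 = 1) : sPerm a * theta * sPerm a = theta := by
  rw [sPerm_mul_theta_comm ha, mul_assoc]
  simp [sPerm, Equiv.swap_mul_self]

lemma sPerm_comm {a b : ℕ} (h : a + 2 ≤ b) : Commute (sPerm a) (sPerm b) := by
  show sPerm a * sPerm b = sPerm b * sPerm a
  ext n
  simp only [Equiv.Perm.mul_apply, sPerm, Equiv.swap_apply_def]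
  split_ifs <;> (try exact (False.elim (by assumption))) <;> omega

lemma heckeConj_eq (w : List ℕ) :
    heckeConj w = ((w.map sPerm).prod)⁻¹ * theta * (w.map sPerm).prod := by
  have hmap : (w.map sPerm).reverse.prod = ((w.map sPerm).prod)⁻¹ := by
    rw [List.prod_reverse_noncomm, List.map_map]
    have hf : ((fun x => x⁻¹) ∘ sPerm) = sPerm := by
      funext x; simp [sPerm_inv]
    rw [hf]
  rw [heckeConj, hmap]

lemma heckeConj_remove (u v : List ℕ) (d : ℕ) (hd : d % 2 = 1)
    (hu : ∀ x ∈ u, d + 2 ≤ x) :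
    heckeConj (u ++ d :: v) = heckeConj (u ++ v) := by
  have hc : ∀ p ∈ u.map sPerm, Commute (sPerm d) p := by
    intro p hp
    rcases List.mem_map.mp hp with ⟨x, hx, rfl⟩
    exact sPerm_comm (hu x hx)
  have h1 : Commute (sPerm d) (u.map sPerm).prod := Commute.list_prod_right _ _ hc
  set S := sPerm d
  set U := (u.map sPerm).prod
  set V := (v.map sPerm).prod
  have hUV : ((u ++ d :: v).map sPerm).prod = S * (U * V) := by
    rw [List.map_append, List.prod_append, List.map_cons, List.prod_cons,
      ← mul_assoc, ← h1.eq, mul_assoc]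
  have hUV' : ((u ++ v).map sPerm).prod = U * V := by
    rw [List.map_append, List.prod_append]
  have hθ' : ∀ x : Equiv.Perm ℕ, S * (theta * (S * x)) = theta * x := by
    intro x
    rw [← mul_assoc, ← mul_assoc, sPerm_theta_sPerm hd]
  rw [heckeConj_eq, heckeConj_eq, hUV, hUV', mul_inv_rev, sPerm_inv]
  simp only [mul_assoc]
  rw [hθ']

lemma getD_nonempty_lt (T : Tab) {i : ℕ} (h : T.getD i [] ≠ []) : i < T.length := by
  by_contra hc
  exact h (List.getD_eq_default _ _ (by omega))

lemma getD_eq_get (T : Tab) {i : ℕ} (h : i < T.length) : T.getD i [] = T.get ⟨i, h⟩ := by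
  rw [List.getD_eq_getElem?_getD, List.getElem?_eq_getElem h]
  rfl

lemma getD_mem (T : Tab) {i : ℕ} (h : i < T.length) : T.getD i [] ∈ T := by
  rw [getD_eq_get T h]; exact List.get_mem _ _

/-- Single step: the first entry of row `j+1` is at least two more than the first
entry of row `j`. -/
lemma head_step (T : Tab) (hT : IsIncreasingTab T) (j e x : ℕ)
    (he : (T.getD j [])[0]? = some e)
    (hx : (T.getD (j+1) [])[0]? = some x) : e + 2 ≤ x := by
  obtain ⟨-, hlen, hrow, -, hcol⟩ := hT
  have hne1 : T.getD (j+1) [] ≠ [] := by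
    intro hc; rw [hc] at hx; simp at hx
  have hj1 : j + 1 < T.length := getD_nonempty_lt T hne1
  have hj : j < T.length := by omega
  -- row j is longer than row j+1, hence has length ≥ 2
  have hlen2 : (T.getD (j+1) []).length < (T.getD j []).length := by
    rw [getD_eq_get T hj1, getD_eq_get T hj]
    exact List.isChain_iff_getElem.mp hlen j (by omega)
  have hlenj1 : 1 ≤ (T.getD (j+1) []).length := by
    cases hq : T.getD (j+1) [] with
    | nil => exact absurd hq hne1
    | cons a l => simp
  have h2 : 2 ≤ (T.getD j []).length := by omega
  -- second entry of row j
  obtain ⟨y, hy⟩ : ∃ y, (T.getD j [])[1]? = some y := by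
    rw [List.getElem?_eq_getElem (by omega)]; exact ⟨_, rfl⟩
  have hyx : y < x := hcol j 0 x y hx hy
  -- e < y since row j is increasing
  have hchain : List.Chain' (· < ·) (T.getD j []) := hrow _ (getD_mem T hj)
  have hey : e < y := by
    cases hq : T.getD j [] with
    | nil => rw [hq] at he; simp at he
    | cons a l =>
      cases l with
      | nil => rw [hq] at hy; simp at hy
      | cons b l2 =>
        rw [hq] at he hy hchain
        simp at he hy
        have hab : a < b := (List.isChain_cons_cons.mp hchain).1
        omega
  omega

lemma head_bound (T : Tab) (hT : IsIncreasingTab T) (i d : ℕ)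
    (hd : (T.getD i [])[0]? = some d) :
    ∀ j, i < j → ∀ x, (T.getD j [])[0]? = some x → d + 2 ≤ x := by
  intro j
  induction j with
  | zero => omega
  | succ j ih =>
    intro hij x hx
    rcases Nat.lt_or_ge i j with hlt | hge
    · -- row j is nonempty since row j+1 is
      have hne1 : T.getD (j+1) [] ≠ [] := by
        intro hc; rw [hc] at hx; simp at hx
      have hj1 : j + 1 < T.length := getD_nonempty_lt T hne1
      have hj : j < T.length := by omega
      have hlen2 : (T.getD (j+1) []).length < (T.getD j []).length := by
        rw [getD_eq_get T hj1, getD_eq_get T hj]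
        exact List.isChain_iff_getElem.mp hT.2.1 j (by omega)
      have hlenj1 : 1 ≤ (T.getD (j+1) []).length := by
        cases hq : T.getD (j+1) [] with
        | nil => exact absurd hq hne1
        | cons a l => simp
      obtain ⟨e, he⟩ : ∃ e, (T.getD j [])[0]? = some e := by
        rw [List.getElem?_eq_getElem (by omega)]; exact ⟨_, rfl⟩
      have := head_step T hT j e x he hx
      have := ih hlt e he
      omega
    · have : i = j := by omega
      subst this
      have := head_step T hT i d x hd hx
      omega

lemma entry_bound (T : Tab) (hT : IsIncreasingTab T) (i d : ℕ)
    (hd : (T.getD i [])[0]? = some d) :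
    ∀ j, i < j → ∀ x ∈ T.getD j [], d + 2 ≤ x := by
  intro j hij x hx
  have hne : T.getD j [] ≠ [] := by
    intro hc; rw [hc] at hx; simp at hx
  have hj : j < T.length := getD_nonempty_lt T hne
  cases hq : T.getD j [] with
  | nil => exact absurd hq hne
  | cons a l =>
    have ha : (T.getD j [])[0]? = some a := by rw [hq]; rfl
    have h2a : d + 2 ≤ a := head_bound T hT i d hd j hij a ha
    rw [hq] at hx
    rcases List.mem_cons.mp hx with hx | hx
    · omega
    · have hchain : List.Chain' (· < ·) (T.getD j []) := hT.2.2.1 _ (getD_mem T hj)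
      rw [hq] at hchain; replace hchain := List.isChain_iff_pairwise.mp hchain
      have := (List.pairwise_cons.mp hchain).1 x hx
      omega

/-- If `T` is an increasing shifted tableau whose row reading word is an FPF-involution
word, then every entry on the main diagonal of `T` (the first entry of each row) is
even. -/
theorem diagonal_entries_even (T : Tab) (hT : IsIncreasingTab T)
    (h : IsFPFWord (rowWord T)) :
    ∀ i d, (T.getD i [])[0]? = some d → Even d := by
  intro i d hd
  -- row i is nonempty
  have hne : T.getD i [] ≠ [] := by
    intro hc; rw [hc] at hd; simp at hd
  have hi : i < T.length := getD_nonempty_lt T hne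
  -- decompose the reading word
  set u : List ℕ := ((T.drop (i+1)).reverse).flatten with hu_def
  set v : List ℕ := (T.getD i []).tail ++ ((T.take i).reverse).flatten with hv_def
  have hrow : T.getD i [] = d :: (T.getD i []).tail := by
    have : (T.getD i []).head? = some d := by rwa [List.head?_eq_getElem?]
    exact (List.cons_head?_tail this).symm
  have hdecomp : rowWord T = u ++ d :: v := by
    have hsplit : T = T.take i ++ T.getD i [] :: T.drop (i+1) := by
      conv_lhs => rw [← List.take_append_drop i T]
      rw [List.drop_eq_getElem_cons hi]
      congr 2
      rw [getD_eq_get T hi]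
      rfl
    rw [rowWord]
    conv_lhs => rw [hsplit]
    rw [List.reverse_append, List.reverse_cons, List.flatten_append, List.flatten_append,
      List.flatten_cons, List.flatten_nil, List.append_nil]
    rw [hv_def, hu_def]
    conv_lhs => rw [hrow]
    simp [List.append_assoc]
  -- all letters of u are ≥ d + 2
  have hu : ∀ x ∈ u, d + 2 ≤ x := by
    intro x hx
    rw [hu_def, List.mem_flatten] at hx
    rcases hx with ⟨r, hr, hxr⟩
    rw [List.mem_reverse] at hr
    rcases List.mem_iff_getElem?.mp hr with ⟨k, hk⟩
    rw [List.getElem?_drop] at hk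
    have hklt : i + 1 + k < T.length := by
      by_contra hc
      rw [List.getElem?_eq_none_iff.mpr (by omega)] at hk
      exact absurd hk (by simp)
    have hrg : r = T.getD (i + 1 + k) [] := by
      rw [List.getD_eq_getElem?_getD, hk]; rfl
    exact entry_bound T hT i d hd (i + 1 + k) (by omega) x (hrg ▸ hxr)
  -- suppose d is odd
  rw [Nat.even_iff]
  by_contra hodd
  have hd1 : d % 2 = 1 := by omega
  obtain ⟨⟨hpos, -⟩, hmin⟩ := h
  -- the shorter word u ++ v is also a symplectic Hecke word for the same element
  have hshort : SympHecke (heckeConj (rowWord T)) (u ++ v) := by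
    constructor
    · intro x hx
      apply hpos
      rw [hdecomp]
      rcases List.mem_append.mp hx with hx | hx
      · exact List.mem_append.mpr (Or.inl hx)
      · exact List.mem_append.mpr (Or.inr (List.mem_cons_of_mem _ hx))
    · rw [hdecomp, heckeConj_remove u v d hd1 hu]
  have := hmin (u ++ v) hshort
  rw [hdecomp] at this
  simp only [List.length_append, List.length_cons] at this
  omega
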